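/- Under the MODWT with quadrature mirror filters (|H̃(f)|² + |G̃(f)|² = 1 for all f), the energy of a time series X of length N decomposes over J levels: ‖X‖² = ∑_{j=1}^{J} ‖W̃_j‖² + ‖Ṽ_J‖², where W̃_j and Ṽ_j are the length-N vectors of level-j MODWT wavelet and scaling coefficients, defined by the cascade transfer functions H̃_j(f) = H̃(2^{j−1}f) ∏_{l=0}^{j−2} G̃(2^l f) and G̃_j(f) = ∏_{l=0}^{j−1} G̃(2^l f). -/

import Mathlib

open Finset Complex

/-- Discrete Fourier transform of a finite sequence. -/
noncomputable def dft (N : ℕ) (X : Fin N → ℂ) (k : Fin N) : ℂ :=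
  ∑ i : Fin N, X i * Complex.exp (-2 * Real.pi * Complex.I * (i : ℕ) * (k : ℕ) / N)

/-- Inverse discrete Fourier transform. -/
noncomputable def idft (N : ℕ) (Y : Fin N → ℂ) (i : Fin N) : ℂ :=
  (N : ℂ)⁻¹ * ∑ k : Fin N, Y k * Complex.exp (2 * Real.pi * Complex.I * (i : ℕ) * (k : ℕ) / N)

/-- Level-`j` MODWT wavelet transfer function built by cascading the level-1
wavelet transfer function `H` and scaling transfer function `G`. -/
noncomputable def cascadeH (H G : ℝ → ℂ) (j : ℕ) (f : ℝ) : ℂ :=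
  H (2 ^ (j - 1) * f) * ∏ l ∈ Finset.range (j - 1), G (2 ^ l * f)

/-- Level-`j` MODWT scaling transfer function. -/
noncomputable def cascadeG (G : ℝ → ℂ) (j : ℕ) (f : ℝ) : ℂ :=
  ∏ l ∈ Finset.range j, G (2 ^ l * f)

/-- Level-`j` MODWT wavelet coefficients of `X`, obtained by circular filtering in
the frequency domain with the cascade transfer function `H̃ⱼ(k/N)`. -/
noncomputable def modwtW (N : ℕ) (H G : ℝ → ℂ) (j : ℕ) (X : Fin N → ℂ) (i : Fin N) : ℂ :=
  idft N (fun k => cascadeH H G j ((k : ℕ) / (N : ℝ)) * dft N X k) i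

/-- Level-`j` MODWT scaling coefficients of `X`. -/
noncomputable def modwtV (N : ℕ) (H G : ℝ → ℂ) (j : ℕ) (X : Fin N → ℂ) (i : Fin N) : ℂ :=
  idft N (fun k => cascadeG G j ((k : ℕ) / (N : ℝ)) * dft N X k) i

noncomputable def eN (N i k : ℕ) : ℂ :=
  Complex.exp (2 * Real.pi * Complex.I * i * k / N)

lemma eN_conj (N i k : ℕ) :
    (starRingEnd ℂ) (eN N i k) = Complex.exp (-(2 * Real.pi * Complex.I * i * k / N)) := by
  rw [eN, ← Complex.exp_conj]
  congr 1
  simp [map_div₀, Complex.conj_I, map_ofNat]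
  ring

lemma orth (N : ℕ) (hN : 0 < N) (k k' : Fin N) :
    ∑ i : Fin N, eN N i k * (starRingEnd ℂ) (eN N i k')
      = if k = k' then (N : ℂ) else 0 := by
  have hterm : ∀ i : Fin N, eN N i k * (starRingEnd ℂ) (eN N i k')
      = Complex.exp (2 * Real.pi * Complex.I * (((k:ℕ):ℂ) - ((k':ℕ):ℂ)) / N) ^ (i:ℕ) := by
    intro i
    rw [eN_conj, eN, ← Complex.exp_add, ← Complex.exp_nat_mul]
    congr 1
    ring
  simp only [hterm]
  rw [Fin.sum_univ_eq_sum_range (fun i => _ ^ i) N]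
  by_cases hkk : k = k'
  · subst hkk
    simp
  · rw [if_neg hkk]
    set r : ℂ := Complex.exp (2 * Real.pi * Complex.I * (((k:ℕ):ℂ) - ((k':ℕ):ℂ)) / N) with hr
    have hNne : (N:ℂ) ≠ 0 := Nat.cast_ne_zero.mpr hN.ne'
    have hrN : r ^ N = 1 := by
      rw [hr, ← Complex.exp_nat_mul]
      have : (N:ℂ) * (2 * Real.pi * Complex.I * (((k:ℕ):ℂ) - ((k':ℕ):ℂ)) / N)
          = ((k:ℤ) - (k':ℤ) : ℤ) * (2 * Real.pi * Complex.I) := by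
        push_cast
        field_simp
      rw [this, Complex.exp_int_mul_two_pi_mul_I]
    have hr1 : r ≠ 1 := by
      intro h
      rw [hr, Complex.exp_eq_one_iff] at h
      obtain ⟨n, hn⟩ := h
      have hpi : (Real.pi : ℂ) ≠ 0 := Complex.ofReal_ne_zero.mpr Real.pi_ne_zero
      have h0 : (2 * (Real.pi : ℂ) * Complex.I) ≠ 0 := by
        simp [hpi, Complex.I_ne_zero]
      have hn' : (2 * (Real.pi : ℂ) * Complex.I) * (((k:ℕ):ℂ) - ((k':ℕ):ℂ))
          = (2 * (Real.pi : ℂ) * Complex.I) * ((n : ℂ) * N) := by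
        have hx : 2 * (Real.pi : ℂ) * Complex.I * (((k:ℕ):ℂ) - ((k':ℕ):ℂ)) / N
            = (n : ℂ) * (2 * Real.pi * Complex.I) := hn
        field_simp at hx
        linear_combination (2 * (Real.pi : ℂ) * Complex.I) * hx
      have hkeq : ((k:ℕ):ℂ) - ((k':ℕ):ℂ) = (n : ℂ) * N := mul_left_cancel₀ h0 hn'
      have hz : ((k:ℕ):ℤ) - ((k':ℕ):ℤ) = n * N := by exact_mod_cast hkeq
      have hk1 : ((k:ℕ):ℤ) < N := by exact_mod_cast k.isLt
      have hk2 : ((k':ℕ):ℤ) < N := by exact_mod_cast k'.isLt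
      have hk3 : (0:ℤ) ≤ ((k:ℕ):ℤ) := by positivity
      have hk4 : (0:ℤ) ≤ ((k':ℕ):ℤ) := by positivity
      have hne : ((k:ℕ):ℤ) - ((k':ℕ):ℤ) ≠ 0 := by
        intro h'
        apply hkk
        have : (k:ℕ) = (k':ℕ) := by omega
        exact Fin.ext this
      have hn0 : n ≠ 0 := by
        intro h'; rw [h'] at hz; simp at hz; exact hne hz
      have habs : |((k:ℕ):ℤ) - ((k':ℕ):ℤ)| < N := by
        rw [abs_lt]; omega
      rw [hz, abs_mul, Int.abs_natCast] at habs
      have h1n : 1 ≤ |n| := Int.one_le_abs hn0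
      have hNz : (0:ℤ) < N := by exact_mod_cast hN
      nlinarith
    rw [geom_sum_eq hr1, hrN]
    simp

lemma idft_eq (N : ℕ) (Y : Fin N → ℂ) (i : Fin N) :
    idft N Y i = (N : ℂ)⁻¹ * ∑ k : Fin N, Y k * eN N i k := rfl

lemma dft_eq (N : ℕ) (X : Fin N → ℂ) (k : Fin N) :
    dft N X k = ∑ i : Fin N, X i * (starRingEnd ℂ) (eN N i k) := by
  unfold dft
  refine Finset.sum_congr rfl fun i _ => ?_
  congr 1
  rw [eN, ← Complex.exp_conj]
  congr 1
  simp [map_div₀, Complex.conj_I, map_ofNat]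

lemma parseval_c (N : ℕ) (hN : 0 < N) (Y : Fin N → ℂ) :
    ∑ i : Fin N, idft N Y i * (starRingEnd ℂ) (idft N Y i)
      = (N : ℂ)⁻¹ * ∑ k : Fin N, Y k * (starRingEnd ℂ) (Y k) := by
  have hNne : (N:ℂ) ≠ 0 := Nat.cast_ne_zero.mpr hN.ne'
  have key : ∀ i : Fin N, idft N Y i * (starRingEnd ℂ) (idft N Y i)
      = (N:ℂ)⁻¹ * (N:ℂ)⁻¹ * ∑ k : Fin N, ∑ k' : Fin N,
          (Y k * (starRingEnd ℂ) (Y k')) * (eN N i k * (starRingEnd ℂ) (eN N i k')) := by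
    intro i
    rw [idft_eq, map_mul, map_sum]
    simp only [map_mul, map_inv₀, map_natCast]
    rw [mul_mul_mul_comm, Finset.sum_mul_sum]
    congr 1
    refine Finset.sum_congr rfl fun k _ => Finset.sum_congr rfl fun k' _ => ?_
    ring
  calc ∑ i : Fin N, idft N Y i * (starRingEnd ℂ) (idft N Y i)
      = (N:ℂ)⁻¹ * (N:ℂ)⁻¹ * ∑ i : Fin N, ∑ k : Fin N, ∑ k' : Fin N,
          (Y k * (starRingEnd ℂ) (Y k')) * (eN N i k * (starRingEnd ℂ) (eN N i k')) := by
        rw [Finset.mul_sum]; exact Finset.sum_congr rfl fun i _ => key i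
    _ = (N:ℂ)⁻¹ * (N:ℂ)⁻¹ * ∑ k : Fin N, ∑ k' : Fin N,
          (Y k * (starRingEnd ℂ) (Y k')) * ∑ i : Fin N, eN N i k * (starRingEnd ℂ) (eN N i k') := by
        congr 1
        rw [Finset.sum_comm]
        refine Finset.sum_congr rfl fun k _ => ?_
        rw [Finset.sum_comm]
        refine Finset.sum_congr rfl fun k' _ => ?_
        rw [Finset.mul_sum]
    _ = (N:ℂ)⁻¹ * ∑ k : Fin N, Y k * (starRingEnd ℂ) (Y k) := by
        simp only [orth N hN]
        rw [Finset.mul_sum, Finset.mul_sum]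
        refine Finset.sum_congr rfl fun k _ => ?_
        simp only [mul_ite, mul_zero, Finset.sum_ite_eq, Finset.mem_univ, if_true]
        field_simp

lemma idft_dft (N : ℕ) (hN : 0 < N) (X : Fin N → ℂ) :
    idft N (dft N X) = X := by
  funext i
  have hNne : (N:ℂ) ≠ 0 := Nat.cast_ne_zero.mpr hN.ne'
  rw [idft_eq]
  have : ∑ k : Fin N, dft N X k * eN N i k
      = ∑ m : Fin N, X m * ∑ k : Fin N, eN N i k * (starRingEnd ℂ) (eN N m k) := by
    simp only [dft_eq, Finset.sum_mul]
    rw [Finset.sum_comm]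
    refine Finset.sum_congr rfl fun m _ => ?_
    rw [Finset.mul_sum]
    refine Finset.sum_congr rfl fun k _ => ?_
    ring
  have horth' : ∀ m : Fin N, ∑ k : Fin N, eN N i k * (starRingEnd ℂ) (eN N m k)
      = if i = m then (N:ℂ) else 0 := by
    intro m
    have hsym : ∀ a b : ℕ, eN N a b = eN N b a := by
      intro a b; unfold eN; congr 1; ring
    rw [Finset.sum_congr rfl fun k _ => by rw [hsym (i:ℕ) (k:ℕ), hsym (m:ℕ) (k:ℕ)]]
    exact orth N hN i m
  rw [this]
  simp only [horth']
  simp only [mul_ite, mul_zero, Finset.sum_ite_eq, Finset.mem_univ, if_true]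
  field_simp

lemma abs_sq_eq (z : ℂ) : ‖z‖ ^ 2 = (z * (starRingEnd ℂ) z).re := by
  rw [Complex.mul_conj]
  simp [Complex.sq_norm]

lemma parseval_abs (N : ℕ) (hN : 0 < N) (Y : Fin N → ℂ) :
    ∑ i : Fin N, ‖idft N Y i‖ ^ 2
      = (N:ℝ)⁻¹ * ∑ k : Fin N, ‖Y k‖ ^ 2 := by
  calc ∑ i : Fin N, ‖idft N Y i‖ ^ 2
      = (∑ i : Fin N, idft N Y i * (starRingEnd ℂ) (idft N Y i)).re := by
        rw [Complex.re_sum]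
        exact Finset.sum_congr rfl fun i _ => abs_sq_eq _
    _ = ((N:ℂ)⁻¹ * ∑ k : Fin N, Y k * (starRingEnd ℂ) (Y k)).re := by
        rw [parseval_c N hN Y]
    _ = (N:ℝ)⁻¹ * (∑ k : Fin N, Y k * (starRingEnd ℂ) (Y k)).re := by
        rw [show ((N:ℂ)⁻¹) = (((N:ℝ)⁻¹ : ℝ) : ℂ) by push_cast; ring,
          Complex.re_ofReal_mul]
    _ = (N:ℝ)⁻¹ * ∑ k : Fin N, ‖Y k‖ ^ 2 := by
        rw [Complex.re_sum]
        exact congrArg _ (Finset.sum_congr rfl fun k _ => (abs_sq_eq _).symm)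

lemma dft_energy (N : ℕ) (hN : 0 < N) (X : Fin N → ℂ) :
    ∑ i : Fin N, ‖X i‖ ^ 2
      = (N:ℝ)⁻¹ * ∑ k : Fin N, ‖dft N X k‖ ^ 2 := by
  conv_lhs => rw [show X = idft N (dft N X) from (idft_dft N hN X).symm]
  exact parseval_abs N hN (dft N X)

lemma cascade_qmf (H G : ℝ → ℂ)
    (hqmf : ∀ f : ℝ, ‖H f‖ ^ 2 + ‖G f‖ ^ 2 = 1)
    (m : ℕ) (f : ℝ) :
    ‖cascadeH H G (m + 1) f‖ ^ 2 + ‖cascadeG G (m + 1) f‖ ^ 2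
      = ‖cascadeG G m f‖ ^ 2 := by
  simp only [cascadeH, cascadeG, Nat.add_sub_cancel, Finset.prod_range_succ]
  rw [norm_mul, norm_mul, mul_pow, mul_pow]
  have h := hqmf (2 ^ m * f)
  nlinarith [h, sq_nonneg (‖∏ l ∈ Finset.range m, G (2 ^ l * f)‖)]

lemma tele (H G : ℝ → ℂ)
    (hqmf : ∀ f : ℝ, ‖H f‖ ^ 2 + ‖G f‖ ^ 2 = 1)
    (J : ℕ) (f : ℝ) :
    (∑ j ∈ Finset.Icc 1 J, ‖cascadeH H G j f‖ ^ 2)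
      + ‖cascadeG G J f‖ ^ 2 = 1 := by
  induction J with
  | zero => simp [cascadeG]
  | succ n ih =>
    rw [Finset.sum_Icc_succ_top (by omega : 1 ≤ n + 1)]
    have hstep := cascade_qmf H G hqmf n f
    linarith

theorem modwt_energy_decomposition
    (N : ℕ) (hN : 0 < N) (X : Fin N → ℂ) (H G : ℝ → ℂ)
    (hqmf : ∀ f : ℝ, ‖H f‖ ^ 2 + ‖G f‖ ^ 2 = 1)
    (J : ℕ) (hJ : 1 ≤ J) :
    (∑ j ∈ Finset.Icc 1 J, ∑ i : Fin N, ‖modwtW N H G j X i‖ ^ 2)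
      + (∑ i : Fin N, ‖modwtV N H G J X i‖ ^ 2)
      = ∑ i : Fin N, ‖X i‖ ^ 2 := by
  have hW : ∀ j : ℕ, ∑ i : Fin N, ‖modwtW N H G j X i‖ ^ 2
      = (N:ℝ)⁻¹ * ∑ k : Fin N,
          ‖cascadeH H G j ((k:ℕ) / (N:ℝ))‖ ^ 2 * ‖dft N X k‖ ^ 2 := by
    intro j
    unfold modwtW
    rw [parseval_abs N hN]
    congr 1
    refine Finset.sum_congr rfl fun k _ => ?_
    rw [norm_mul, mul_pow]
  have hV : ∑ i : Fin N, ‖modwtV N H G J X i‖ ^ 2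
      = (N:ℝ)⁻¹ * ∑ k : Fin N,
          ‖cascadeG G J ((k:ℕ) / (N:ℝ))‖ ^ 2 * ‖dft N X k‖ ^ 2 := by
    unfold modwtV
    rw [parseval_abs N hN]
    congr 1
    refine Finset.sum_congr rfl fun k _ => ?_
    rw [norm_mul, mul_pow]
  simp only [hW, hV]
  rw [← Finset.mul_sum, ← mul_add, Finset.sum_comm, ← Finset.sum_add_distrib]
  have hpoint : ∀ k : Fin N,
      ((∑ j ∈ Finset.Icc 1 J,
          ‖cascadeH H G j ((k:ℕ) / (N:ℝ))‖ ^ 2 * ‖dft N X k‖ ^ 2)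
        + ‖cascadeG G J ((k:ℕ) / (N:ℝ))‖ ^ 2 * ‖dft N X k‖ ^ 2)
      = ‖dft N X k‖ ^ 2 := by
    intro k
    rw [← Finset.sum_mul, ← add_mul, tele H G hqmf J ((k:ℕ) / (N:ℝ)), one_mul]
  rw [Finset.sum_congr rfl fun k _ => hpoint k, ← dft_energy N hN X]
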